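/- Let r ≥ 1 be an integer, u > 1 real, and x > 1 the solution of Σ_{j=1}^r x^j = u·r. If r ≥ log u, then x^r > e^{−1}·u·log u and x^r ≤ 1 + 2·u·log u. -/

import Mathlib

set_option maxHeartbeats 1600000 in
theorem stmt_8 (r : ℕ) (hr : 1 ≤ r) (u x : ℝ) (hu : 1 < u) (hx : 1 < x)
    (hsaddle : ∑ j ∈ Finset.Icc 1 r, x ^ j = u * r)
    (hrlog : Real.log u ≤ r) :
    Real.exp (-1) * u * Real.log u < x ^ r ∧ x ^ r ≤ 1 + 2 * u * Real.log u := by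
  have hx0 : (0:ℝ) < x := by linarith
  have hu0 : (0:ℝ) < u := by linarith
  have hr0 : (0:ℝ) < (r:ℝ) := by exact_mod_cast Nat.lt_of_lt_of_le Nat.zero_lt_one hr
  have hlogu : 0 < Real.log u := Real.log_pos hu
  -- sum identity : Σ_{j∈Icc 1 r} x^j = x * Σ_{j<r} x^j
  have hreindex : ∑ j ∈ Finset.Icc 1 r, x ^ j = x * ∑ j ∈ Finset.range r, x ^ j := by
    rw [Finset.mul_sum]
    rw [← Finset.Ico_add_one_right_eq_Icc]
    rw [Finset.sum_Ico_eq_sum_range]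
    simp [pow_succ, mul_comm, Nat.add_comm]
  -- key equation : u r (x-1) = x (x^r - 1)
  have hE : u * r * (x - 1) = x * (x ^ r - 1) := by
    have := geom_sum_mul x r
    calc u * r * (x - 1) = (∑ j ∈ Finset.Icc 1 r, x ^ j) * (x - 1) := by rw [hsaddle]
    _ = x * ((∑ j ∈ Finset.range r, x ^ j) * (x - 1)) := by rw [hreindex]; ring
    _ = x * (x ^ r - 1) := by rw [this]
  set t : ℝ := (r:ℝ) * (x - 1) / x with ht_def
  clear_value t
  have ht0 : 0 ≤ t := by
    rw [ht_def]
    apply div_nonneg ?_ hx0.le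
    nlinarith
  have hkey : x ^ r = 1 + u * t := by
    rw [ht_def]
    field_simp
    nlinarith [hE]
  -- x^r ≥ u
  have hyu : u ≤ x ^ r := by
    have hb : ∑ j ∈ Finset.Icc 1 r, x ^ j ≤ (r:ℝ) * x ^ r := by
      have := Finset.sum_le_card_nsmul (Finset.Icc 1 r) (fun j => x ^ j) (x ^ r)
        (fun j hj => pow_le_pow_right₀ (le_of_lt hx) (Finset.mem_Icc.mp hj).2)
      simpa [Nat.card_Icc, nsmul_eq_mul] using this
    rw [hsaddle] at hb
    have := (mul_le_mul_iff_of_pos_right hr0).mp (by linarith [hb] : u * r ≤ x ^ r * r)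
    linarith
  have hlogxle : Real.log x ≤ x - 1 := Real.log_le_sub_one_of_pos hx0
  have hlogxge : 1 - 1/x ≤ Real.log x := by
    have := Real.log_le_sub_one_of_pos (show (0:ℝ) < 1/x by positivity)
    rw [Real.log_div one_ne_zero (ne_of_gt hx0), Real.log_one] at this
    linarith
  have hlogpow : Real.log (x ^ r) = (r:ℝ) * Real.log x := by
    rw [Real.log_pow]
  -- lemma A : 1 + 2 u log u < u^2
  have lemA : 1 + 2 * u * Real.log u < u ^ 2 := by
    set s := Real.log u with hs_def
    clear_value s
    have hsinh : s < Real.sinh s := by rw [Real.self_lt_sinh_iff]; exact hlogu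
    rw [Real.sinh_eq] at hsinh
    have hexps : Real.exp s = u := by rw [hs_def, Real.exp_log hu0]
    have hprod : Real.exp s * Real.exp (-s) = 1 := by
      rw [← Real.exp_add]; simp
    nlinarith [Real.exp_pos s, Real.exp_pos (-s)]
  constructor
  · -- lower bound
    have hty : Real.log (x ^ r) / x ≤ t := by
      rw [hlogpow, ht_def]
      apply (div_le_div_iff_of_pos_right hx0).mpr
      nlinarith [hlogxle]
    have hlogy : Real.log u ≤ Real.log (x ^ r) := Real.log_le_log hu0 hyu
    rcases le_or_gt x (Real.exp 1) with hxe | hxe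
    · -- x ≤ e
      have h1 : u * Real.log u / x ≤ u * t := by
        calc u * Real.log u / x ≤ u * Real.log (x ^ r) / x := by
              apply (div_le_div_iff_of_pos_right hx0).mpr
              nlinarith
        _ = u * (Real.log (x ^ r) / x) := by ring
        _ ≤ u * t := mul_le_mul_of_nonneg_left hty hu0.le
      have h2 : Real.exp (-1) * u * Real.log u ≤ u * Real.log u / x := by
        rw [Real.exp_neg, div_eq_mul_inv]
        have hxinv : (Real.exp 1)⁻¹ ≤ x⁻¹ := inv_anti₀ hx0 hxe
        nlinarith [mul_pos hu0 hlogu]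
      calc Real.exp (-1) * u * Real.log u ≤ u * Real.log u / x := h2
      _ ≤ u * t := h1
      _ < 1 + u * t := by linarith
      _ = x ^ r := hkey.symm
    · -- x > e
      have he2 : (2:ℝ) < Real.exp 1 := by
        have := Real.exp_one_gt_d9; norm_num at this ⊢; linarith
      have hxinv : 1/x ≤ 1/Real.exp 1 :=
        one_div_le_one_div_of_le (Real.exp_pos 1) hxe.le
      have hfrac : 1 - 1/Real.exp 1 ≤ (x - 1)/x := by
        have hid : (x - 1)/x = 1 - 1/x := by field_simp
        rw [hid]; linarith
      have htlb : Real.log u * (1 - 1/Real.exp 1) ≤ t := by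
        rw [ht_def]
        calc Real.log u * (1 - 1/Real.exp 1) ≤ (r:ℝ) * ((x-1)/x) := by
              apply mul_le_mul hrlog hfrac ?_ (le_of_lt hr0)
              have : 1/Real.exp 1 < 1 := by
                rw [div_lt_one (Real.exp_pos 1)]; linarith
              linarith
        _ = (r:ℝ) * (x - 1) / x := by ring
      have hee : Real.exp (-1) < 1 - 1/Real.exp 1 := by
        rw [Real.exp_neg, one_div]
        have h1 : (Real.exp 1)⁻¹ < 1/2 := by
          rw [inv_lt_comm₀ (Real.exp_pos 1) (by norm_num)]
          linarith
        linarith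
      have hul : 0 < u * Real.log u := mul_pos hu0 hlogu
      have step1 : Real.exp (-1) * u * Real.log u < (u * Real.log u) * (1 - 1/Real.exp 1) :=
        calc Real.exp (-1) * u * Real.log u = (u * Real.log u) * Real.exp (-1) := by ring
        _ < (u * Real.log u) * (1 - 1/Real.exp 1) := by
            exact mul_lt_mul_of_pos_left hee hul
      have step2 : (u * Real.log u) * (1 - 1/Real.exp 1) ≤ u * t :=
        calc (u * Real.log u) * (1 - 1/Real.exp 1)
            = u * (Real.log u * (1 - 1/Real.exp 1)) := by ring
        _ ≤ u * t := mul_le_mul_of_nonneg_left htlb hu0.le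
      calc Real.exp (-1) * u * Real.log u < (u * Real.log u) * (1 - 1/Real.exp 1) := step1
      _ ≤ u * t := step2
      _ < 1 + u * t := by linarith
      _ = x ^ r := hkey.symm
  · -- upper bound
    have hexpt : Real.exp t ≤ x ^ r := by
      rw [show x ^ r = Real.exp (Real.log (x ^ r)) from
        (Real.exp_log (by positivity)).symm]
      apply Real.exp_le_exp.mpr
      rw [hlogpow, ht_def, div_le_iff₀ hx0]
      have h2 := mul_le_mul_of_nonneg_right hlogxge hx0.le
      have h3 : (1 - 1/x) * x = x - 1 := by field_simp
      have h1 : x - 1 ≤ Real.log x * x := by linarith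
      calc (r:ℝ) * (x - 1) ≤ (r:ℝ) * (Real.log x * x) :=
            mul_le_mul_of_nonneg_left h1 hr0.le
      _ = (r:ℝ) * Real.log x * x := by ring
    have ht2 : t ≤ 2 * Real.log u := by
      by_contra h
      push_neg at h
      set d := t - 2 * Real.log u with hd_def
      clear_value d
      have hd0 : 0 < d := by linarith
      have hexpd : 1 + d ≤ Real.exp d := by linarith [Real.add_one_le_exp d]
      have hexp2 : Real.exp (2 * Real.log u) = u ^ 2 := by
        rw [two_mul, Real.exp_add, Real.exp_log hu0]; ring
      have hsplit : Real.exp t = u ^ 2 * Real.exp d := by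
        rw [show t = 2 * Real.log u + d by rw [hd_def]; ring, Real.exp_add, hexp2]
      rw [hsplit, hkey] at hexpt
      have hu2 : u < u ^ 2 := by nlinarith
      have huu : u * d < u ^ 2 * d := mul_lt_mul_of_pos_right hu2 hd0
      have hA : u ^ 2 + u ^ 2 * d ≤ u ^ 2 * Real.exp d :=
        calc u ^ 2 + u ^ 2 * d = u ^ 2 * (1 + d) := by ring
        _ ≤ u ^ 2 * Real.exp d := mul_le_mul_of_nonneg_left hexpd (by positivity)
      have hB : u * t = 2 * (u * Real.log u) + u * d := by rw [hd_def]; ring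
      linarith
    rw [hkey]
    have := mul_le_mul_of_nonneg_left ht2 hu0.le
    linarith
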